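/- For d = 2 (the matrix case), if A is an m×n matrix with ‖A − X‖_C ≤ E_C for some rank-r matrix X, and (I,J) is the maximum-volume choice of r rows and columns, then the skeleton interpolation Ã = A(:,J)A(I,J)^{-1}A(I,:) satisfies ‖A − Ã‖_C ≤ (r+1)² E_C. -/

import Mathlib

/-- The Chebyshev (max-entry) norm of a real matrix. -/
noncomputable def chebNorm {m n : ℕ} (M : Matrix (Fin m) (Fin n) ℝ) : ℝ :=
  ⨆ i, ⨆ j, |M i j|

lemma entry_le_chebNorm {m n : ℕ} (M : Matrix (Fin m) (Fin n) ℝ) (i : Fin m) (j : Fin n) :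
    |M i j| ≤ chebNorm M := by
  have h1 : |M i j| ≤ ⨆ j, |M i j| :=
    le_ciSup (f := fun j => |M i j|) (Set.Finite.bddAbove (Set.finite_range _)) j
  have h2 : (⨆ j, |M i j|) ≤ ⨆ i, ⨆ j, |M i j| :=
    le_ciSup (f := fun i => ⨆ j, |M i j|) (Set.Finite.bddAbove (Set.finite_range _)) i
  exact h1.trans h2

lemma chebNorm_nonneg {m n : ℕ} (M : Matrix (Fin m) (Fin n) ℝ) : 0 ≤ chebNorm M :=
  Real.iSup_nonneg fun _ => Real.iSup_nonneg fun _ => abs_nonneg _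

lemma chebNorm_le {m n : ℕ} {M : Matrix (Fin m) (Fin n) ℝ} {c : ℝ}
    (h : ∀ i j, |M i j| ≤ c) (hc : 0 ≤ c) : chebNorm M ≤ c :=
  Real.iSup_le (fun i => Real.iSup_le (fun j => h i j) hc) hc

lemma rank_submatrix_le' {m n k l : ℕ} (X : Matrix (Fin m) (Fin n) ℝ)
    (ρ : Fin k → Fin m) (γ : Fin l → Fin n) : (X.submatrix ρ γ).rank ≤ X.rank := by
  have h1 : ((1 : Matrix (Fin m) (Fin m) ℝ).submatrix ρ (Equiv.refl _)) * X
      = X.submatrix ρ id := by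
    rw [Matrix.one_submatrix_mul]; rfl
  have h2 : X.submatrix ρ id * ((1 : Matrix (Fin n) (Fin n) ℝ).submatrix (Equiv.refl _) γ)
      = X.submatrix ρ γ := by
    rw [Matrix.mul_submatrix_one]; rfl
  calc (X.submatrix ρ γ).rank = (X.submatrix ρ id * ((1 : Matrix (Fin n) (Fin n) ℝ).submatrix (Equiv.refl _) γ)).rank := by rw [h2]
    _ ≤ (X.submatrix ρ id).rank := Matrix.rank_mul_le_left _ _
    _ = (((1 : Matrix (Fin m) (Fin m) ℝ).submatrix ρ (Equiv.refl _)) * X).rank := by rw [h1]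
    _ ≤ X.rank := Matrix.rank_mul_le_right _ _

lemma finSumFinEquiv_symm_castSucc {r : ℕ} (p : Fin r) :
    (finSumFinEquiv (n := 1)).symm (Fin.castSucc p) = Sum.inl p :=
  finSumFinEquiv_symm_apply_castAdd p

lemma schur_step {m n r : ℕ} (A : Matrix (Fin m) (Fin n) ℝ) (I : Fin r → Fin m) (J : Fin r → Fin n)
    (hinv : IsUnit (A.submatrix I J).det) (i : Fin m) (j : Fin n) :
    (A.submatrix (Fin.snoc I i) (Fin.snoc J j)).det
      = (A.submatrix I J).det *
        ((A - A.submatrix id J * (A.submatrix I J)⁻¹ * A.submatrix I id) i j) := by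
  haveI := (A.submatrix I J).invertibleOfIsUnitDet hinv
  set K := A.submatrix I J with hK
  have hB : A.submatrix (Fin.snoc I i) (Fin.snoc J j)
      = (Matrix.fromBlocks K (fun k (_ : Fin 1) => A (I k) j) (fun (_ : Fin 1) k => A i (J k))
          (fun _ _ => A i j)).submatrix finSumFinEquiv.symm finSumFinEquiv.symm := by
    ext p q
    refine Fin.lastCases ?_ (fun p' => ?_) p <;> refine Fin.lastCases ?_ (fun q' => ?_) q <;>
      simp [finSumFinEquiv_symm_last, finSumFinEquiv_symm_castSucc, hK, Matrix.fromBlocks_apply₁₁,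
        Matrix.fromBlocks_apply₁₂, Matrix.fromBlocks_apply₂₁, Matrix.fromBlocks_apply₂₂] <;> rfl
  rw [hB, Matrix.det_submatrix_equiv_self]
  refine (Matrix.det_fromBlocks₁₁ _ _ _ _).trans ?_
  rw [Matrix.invOf_eq_nonsing_inv]
  congr 1
  rw [Matrix.det_fin_one]
  simp only [Matrix.sub_apply, Matrix.mul_apply, Matrix.submatrix_apply, id]
  rfl

open Finset Matrix in
lemma det_snoc_bound {m n r : ℕ} (A X : Matrix (Fin m) (Fin n) ℝ) (E_C : ℝ)
    (hX : X.rank ≤ r) (hXE : ∀ a b, |(A - X) a b| ≤ E_C)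
    (I : Fin r → Fin m) (J : Fin r → Fin n)
    (hmax : ∀ (I' : Fin r → Fin m) (J' : Fin r → Fin n),
      |(A.submatrix I' J').det| ≤ |(A.submatrix I J).det|)
    (ρ : Fin (r+1) → Fin m) (γ : Fin (r+1) → Fin n) :
    |(A.submatrix ρ γ).det| ≤ ((r:ℝ)+1)^2 * E_C * |(A.submatrix I J).det| := by
  have hE0 : 0 ≤ E_C := (abs_nonneg _).trans (hXE (ρ 0) (γ 0))
  set B := A.submatrix ρ γ with hBdef
  set BX := X.submatrix ρ γ with hBXdef
  set F := (A - X).submatrix ρ γ with hFdef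
  have hBXdet : BX.det = 0 := by
    by_contra h
    have hu : IsUnit BX := (Matrix.isUnit_iff_isUnit_det _).2 (isUnit_iff_ne_zero.2 h)
    have h1 := Matrix.rank_of_isUnit _ hu
    rw [Fintype.card_fin] at h1
    have h2 : BX.rank ≤ X.rank := by
      have e1 : ((1 : Matrix (Fin m) (Fin m) ℝ).submatrix ρ (Equiv.refl _)) * X
          = X.submatrix ρ id := by rw [Matrix.one_submatrix_mul]; rfl
      have e2 : X.submatrix ρ id * ((1 : Matrix (Fin n) (Fin n) ℝ).submatrix (Equiv.refl _) γ)
          = X.submatrix ρ γ := by rw [Matrix.mul_submatrix_one]; rfl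
      calc BX.rank = (X.submatrix ρ id * ((1 : Matrix (Fin n) (Fin n) ℝ).submatrix (Equiv.refl _) γ)).rank := by rw [e2]
        _ ≤ (X.submatrix ρ id).rank := Matrix.rank_mul_le_left _ _
        _ = (((1 : Matrix (Fin m) (Fin m) ℝ).submatrix ρ (Equiv.refl _)) * X).rank := by rw [e1]
        _ ≤ X.rank := Matrix.rank_mul_le_right _ _
    omega
  obtain ⟨v, hv0, hvB⟩ := (Matrix.exists_mulVec_eq_zero_iff).2 hBXdet
  obtain ⟨l, -, hl⟩ := Finset.exists_max_image Finset.univ (fun k => |v k|)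
    ⟨0, Finset.mem_univ (0 : Fin (r+1))⟩
  simp only [Finset.mem_univ, forall_const] at hl
  have hvl : 0 < |v l| := by
    rcases Function.ne_iff.1 hv0 with ⟨k, hk⟩
    exact lt_of_lt_of_le (abs_pos.2 hk) (hl k)
  have hBv : B *ᵥ v = F *ᵥ v := by
    have hBS : B = BX + F := by ext p q; simp [hBdef, hBXdef, hFdef, Matrix.sub_apply]
    rw [hBS, Matrix.add_mulVec, hvB, zero_add]
  have hcr : (Matrix.cramer B) (B *ᵥ v) = B.det • v := by
    rw [Matrix.cramer_eq_adjugate_mulVec, Matrix.mulVec_mulVec, Matrix.adjugate_mul,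
      Matrix.smul_mulVec, Matrix.one_mulVec]
  set w := F *ᵥ v with hwdef
  have hw : ∀ k, |w k| ≤ ((r:ℝ)+1) * (E_C * |v l|) := by
    intro k
    calc |w k| = |∑ p, F k p * v p| := by rw [hwdef]; rfl
      _ ≤ ∑ p, |F k p * v p| := Finset.abs_sum_le_sum_abs _ _
      _ ≤ ∑ _p : Fin (r+1), E_C * |v l| := by
          refine Finset.sum_le_sum fun p _ => ?_
          rw [abs_mul]
          exact mul_le_mul (hXE _ _) (hl p) (abs_nonneg _) hE0
      _ = ((r:ℝ)+1) * (E_C * |v l|) := by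
          rw [Finset.sum_const, Finset.card_univ, Fintype.card_fin, nsmul_eq_mul]
          push_cast; ring
  have hcof : ∀ k, |(B.updateCol l (Pi.single k 1)).det| ≤ |(A.submatrix I J).det| := by
    intro k
    have hdet : (B.updateCol l (Pi.single k 1)).det
        = (-1:ℝ)^(k+l : ℕ) * (A.submatrix (ρ ∘ Fin.succAbove k) (γ ∘ Fin.succAbove l)).det := by
      have hsub : (B.updateCol l (Pi.single k 1)).submatrix (Fin.succAbove k)
          (Fin.succAbove l) = A.submatrix (ρ ∘ Fin.succAbove k) (γ ∘ Fin.succAbove l) := by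
        ext a b
        rw [Matrix.submatrix_apply, Matrix.updateCol_ne (Fin.succAbove_ne l b)]
        rfl
      rw [Matrix.det_succ_column _ l, Finset.sum_eq_single k]
      · rw [hsub, Matrix.updateCol_self, Pi.single_eq_same, mul_one]
      · intro p _ hp
        rw [Matrix.updateCol_self, Pi.single_eq_of_ne hp, mul_zero, zero_mul]
      · intro h; exact absurd (Finset.mem_univ k) h
    rw [hdet, abs_mul, abs_pow, abs_neg, abs_one, one_pow, one_mul]
    exact hmax _ _
  have hwdec : w = ∑ k, w k • (Pi.single k 1 : Fin (r+1) → ℝ) := by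
    ext p
    simp [Pi.single_apply, Finset.sum_ite_eq]
  have key : B.det * v l = ∑ k, w k * (B.updateCol l (Pi.single k 1)).det := by
    have h1 : B.det * v l = (Matrix.cramer B) (B *ᵥ v) l := by
      rw [hcr]; simp [mul_comm]
    rw [h1, hBv]
    nth_rewrite 1 [hwdec]
    rw [map_sum]
    simp only [_root_.map_smul, Finset.sum_apply, Pi.smul_apply, smul_eq_mul, Matrix.cramer_apply,
      Matrix.det_updateCol_smul]
  have hmain : |B.det| * |v l| ≤ (((r:ℝ)+1)^2 * E_C * |(A.submatrix I J).det|) * |v l| := by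
    calc |B.det| * |v l| = |B.det * v l| := (abs_mul _ _).symm
      _ = |∑ k, w k * (B.updateCol l (Pi.single k 1)).det| := by rw [key]
      _ ≤ ∑ k, |w k * (B.updateCol l (Pi.single k 1)).det| := Finset.abs_sum_le_sum_abs _ _
      _ ≤ ∑ _k : Fin (r+1), (((r:ℝ)+1) * (E_C * |v l|)) * |(A.submatrix I J).det| := by
          refine Finset.sum_le_sum fun k _ => ?_
          rw [abs_mul]
          exact mul_le_mul (hw k) (hcof k) (abs_nonneg _)
            (by positivity)
      _ = (((r:ℝ)+1)^2 * E_C * |(A.submatrix I J).det|) * |v l| := by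
          rw [Finset.sum_const, Finset.card_univ, Fintype.card_fin, nsmul_eq_mul]
          push_cast; ring
  exact le_of_mul_le_mul_right hmain hvl


/-- Goreinov–Tyrtyshnikov quasioptimality (Chebyshev norm): the maximum-volume
skeleton interpolation satisfies `‖A − Ã‖_C ≤ (r+1)² min_{rank X = r} ‖A − X‖_C`. -/
theorem maxvol_quasioptimality_cheb {m n r : ℕ} (A X : Matrix (Fin m) (Fin n) ℝ)
    (E_C : ℝ) (hX : X.rank ≤ r) (hXE : chebNorm (A - X) ≤ E_C)
    (I : Fin r → Fin m) (J : Fin r → Fin n)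
    (hmax : ∀ (I' : Fin r → Fin m) (J' : Fin r → Fin n),
      |(A.submatrix I' J').det| ≤ |(A.submatrix I J).det|)
    (hinv : IsUnit (A.submatrix I J).det) :
    chebNorm (A - A.submatrix id J * (A.submatrix I J)⁻¹ * A.submatrix I id)
      ≤ (r + 1) ^ 2 * E_C := by
  have hE0 : 0 ≤ E_C := (chebNorm_nonneg _).trans hXE
  have hKpos : 0 < |(A.submatrix I J).det| := abs_pos.2 hinv.ne_zero
  refine chebNorm_le (fun i j => ?_) (by positivity)
  have hXE' : ∀ a b, |(A - X) a b| ≤ E_C := fun a b => (entry_le_chebNorm _ a b).trans hXE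
  have h1 := det_snoc_bound A X E_C hX hXE' I J hmax (Fin.snoc I i) (Fin.snoc J j)
  rw [schur_step A I J hinv i j, abs_mul] at h1
  rw [mul_comm] at h1
  have h2 := le_of_mul_le_mul_right h1 hKpos
  exact h2
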